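/- arXiv:1807.05134 — 5 statements merged into one kernel-verified Lean document; each statement's English description precedes it below -/
import Mathlib

section
/- A traceless complex 4×4 matrix M satisfies [y₀, M] = 0 if and only if there exist a, b, c, d, e ∈ ℂ with M = B(a,b,c,d,e) − x₀. Equivalently, the Slodowy slice x₀ + ker(ad(y₀)) in sl(4,ℂ) equals exactly the set of matrices B(a,b,c,d,e) with a, b, c, d, e ∈ ℂ. -/
noncomputable section

/-- `x₀ = E₂₃ + E₃₄` in `sl(4,ℂ)`. -/
def x0 : Matrix (Fin 4) (Fin 4) ℂ :=
  !![0,0,0,0; 0,0,1,0; 0,0,0,1; 0,0,0,0]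

/-- `y₀ = E₃₂ + E₄₃` in `sl(4,ℂ)`. -/
def y0 : Matrix (Fin 4) (Fin 4) ℂ :=
  !![0,0,0,0; 0,0,0,0; 0,1,0,0; 0,0,1,0]

/-- The matrix `B(a,b,c,d,e)` with rows `(−3a, b, 0, 0), (0, a, 1, 0), (0, c, a, 1), (d, e, c, a)`. -/
def Bmat (a b c d e : ℂ) : Matrix (Fin 4) (Fin 4) ℂ :=
  !![-3*a, b, 0, 0; 0, a, 1, 0; 0, c, a, 1; d, e, c, a]

/-- A traceless `4 × 4` matrix `M` satisfies `[y₀, M] = 0` iff `M = B(a,b,c,d,e) − x₀` for some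
`a, b, c, d, e ∈ ℂ`; i.e. the Slodowy slice `x₀ + ker ad(y₀)` in `sl(4,ℂ)` consists exactly of
the matrices `B(a,b,c,d,e)`. -/
theorem slodowy_slice_sl4 (M : Matrix (Fin 4) (Fin 4) ℂ) (hM : M.trace = 0) :
    y0 * M - M * y0 = 0 ↔ ∃ a b c d e : ℂ, M = Bmat a b c d e - x0 := by
  constructor
  · intro h
    have key : ∀ i j, (y0 * M - M * y0) i j = 0 := fun i j => by rw [h]; rfl
    have h01 := key 0 1; have h02 := key 0 2
    have h11 := key 1 1; have h12 := key 1 2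
    have h20 := key 2 0; have h21 := key 2 1; have h22 := key 2 2; have h23 := key 2 3
    have h30 := key 3 0; have h31 := key 3 1; have h32 := key 3 2; have h33 := key 3 3
    simp [Matrix.sub_apply, Matrix.mul_apply, Fin.sum_univ_four, y0, Matrix.vecMul,
      dotProduct, sub_eq_zero] at h01 h02 h11 h12 h20 h21 h22 h23 h30 h31 h32 h33
    simp only [Matrix.trace, Matrix.diag, Fin.sum_univ_four] at hM
    refine ⟨M 1 1, M 0 1, M 2 1, M 3 0, M 3 1, ?_⟩
    ext i j
    fin_cases i <;> fin_cases j <;>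
      simp [Bmat, x0, Matrix.vecHead, Matrix.vecTail] <;>
      first
        | linear_combination hM + 2*h21 + h32
        | linear_combination h01
        | linear_combination h02
        | linear_combination h20
        | linear_combination h11
        | linear_combination h12
        | linear_combination h30
        | linear_combination h33
        | linear_combination -h21
        | linear_combination -h31
        | linear_combination -h21 - h32
  · rintro ⟨a, b, c, d, e, rfl⟩
    ext i j
    fin_cases i <;> fin_cases j <;>
      simp [Bmat, x0, y0, Matrix.mul_apply, Fin.sum_univ_four]
end
end

section
/- For all a, b, c, d, e ∈ ℂ, the involution τ(A) = −g₀ Aᵀ g₀ maps the Slodowy slice to itself, with the explicit formula τ(B(a,b,c,d,e)) = B(−a, d, c, b, −e). -/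
noncomputable section

/-- `g₀ = E₁₁ + E₃₃ − E₂₄ − E₄₂`. -/
def g0 : Matrix (Fin 4) (Fin 4) ℂ :=
  !![1,0,0,0; 0,0,0,-1; 0,0,1,0; 0,-1,0,0]

/-- `τ(A) = −g₀ Aᵀ g₀`. -/
def tau (A : Matrix (Fin 4) (Fin 4) ℂ) : Matrix (Fin 4) (Fin 4) ℂ :=
  -(g0 * A.transpose * g0)

/-- The involution `τ` maps the Slodowy slice to itself:
`τ(B(a,b,c,d,e)) = B(−a, d, c, b, −e)`. -/
theorem tau_Bmat (a b c d e : ℂ) :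
    tau (Bmat a b c d e) = Bmat (-a) d c b (-e) := by
  show -(g0 * (Bmat a b c d e).transpose * g0) = _
  rw [show (Bmat a b c d e).transpose = !![-3*a,0,0,d; b,a,c,e; 0,1,a,c; 0,0,1,a] by
    simp [Bmat]; ext i j; fin_cases i <;> fin_cases j <;> rfl]
  simp only [g0, Bmat]
  ext i j
  fin_cases i <;> fin_cases j <;>
    simp [Matrix.mul_apply, Fin.sum_univ_four] <;> ring
end
end

section
/- A matrix M ∈ 𝔰𝔬(5,ℂ) satisfies [y, M] = 0 if and only if there exist a, b, c, d ∈ ℂ with M = C(a,b,c,d) − x. Equivalently, the Slodowy slice x + ker(ad(y)) in 𝔰𝔬(5,ℂ) equals exactly the set of matrices C(a,b,c,d) with a, b, c, d ∈ ℂ. -/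
noncomputable section

/-- The symmetric bilinear form matrix `J = E₁₁ + E₂₄ + E₄₂ + E₃₅ + E₅₃`. -/
def J5 : Matrix (Fin 5) (Fin 5) ℂ :=
  !![1,0,0,0,0; 0,0,0,1,0; 0,0,0,0,1; 0,1,0,0,0; 0,0,1,0,0]

/-- The subregular nilpotent `x` with nonzero entries `x₁₄ = 1, x₂₁ = −1, x₂₃ = 1, x₅₄ = −1`. -/
def x5 : Matrix (Fin 5) (Fin 5) ℂ :=
  !![0,0,0,1,0; -1,0,1,0,0; 0,0,0,0,0; 0,0,0,0,0; 0,0,0,-1,0]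

/-- The nilpotent `y` with nonzero entries `y₁₂ = −2, y₄₁ = 2, y₄₃ = −2, y₅₂ = 2`. -/
def y5 : Matrix (Fin 5) (Fin 5) ℂ :=
  !![0,-2,0,0,0; 0,0,0,0,0; 0,0,0,0,0; 2,0,-2,0,0; 0,2,0,0,0]

/-- The matrix `C(a,b,c,d)` with rows
`(0, −a, −b, 1, 0), (−1, 0, 1, 0, 0), (0, c, −b, 0, 0), (a, 0, d, 0, −c), (b, −d, 0, −1, b)`. -/
def Cmat (a b c d : ℂ) : Matrix (Fin 5) (Fin 5) ℂ :=
  !![0, -a, -b, 1, 0; -1, 0, 1, 0, 0; 0, c, -b, 0, 0; a, 0, d, 0, -c; b, -d, 0, -1, b]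

set_option maxHeartbeats 1000000 in
/-- A matrix `M ∈ 𝔰𝔬(5,ℂ)` satisfies `[y, M] = 0` iff `M = C(a,b,c,d) − x` for some
`a, b, c, d ∈ ℂ`; i.e. the Slodowy slice `x + ker ad(y)` in `𝔰𝔬(5,ℂ)` consists exactly of
the matrices `C(a,b,c,d)`. -/
theorem slodowy_slice_so5 (M : Matrix (Fin 5) (Fin 5) ℂ)
    (hM : M.transpose * J5 = -(J5 * M)) :
    y5 * M - M * y5 = 0 ↔ ∃ a b c d : ℂ, M = Cmat a b c d - x5 := by
  constructor
  · intro h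
    refine ⟨M 3 0, M 4 4, -(M 3 4), -(M 4 1), ?_⟩
    have hC01 := congrFun (congrFun h 0) 1
    have hC02 := congrFun (congrFun h 0) 2
    have hC04 := congrFun (congrFun h 0) 4
    have hC11 := congrFun (congrFun h 1) 1
    have hC21 := congrFun (congrFun h 2) 1
    have hC32 := congrFun (congrFun h 3) 2
    have hJ00 := congrFun (congrFun hM 0) 0
    have hJ01 := congrFun (congrFun hM 0) 1
    have hJ02 := congrFun (congrFun hM 0) 2
    have hJ03 := congrFun (congrFun hM 0) 3
    have hJ04 := congrFun (congrFun hM 0) 4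
    have hJ11 := congrFun (congrFun hM 1) 1
    have hJ12 := congrFun (congrFun hM 1) 2
    have hJ13 := congrFun (congrFun hM 1) 3
    have hJ14 := congrFun (congrFun hM 1) 4
    have hJ22 := congrFun (congrFun hM 2) 2
    have hJ23 := congrFun (congrFun hM 2) 3
    have hJ24 := congrFun (congrFun hM 2) 4
    have hJ33 := congrFun (congrFun hM 3) 3
    have hJ34 := congrFun (congrFun hM 3) 4
    have hJ44 := congrFun (congrFun hM 4) 4
    simp only [Matrix.mul_apply, Matrix.transpose_apply, Matrix.neg_apply, Matrix.sub_apply,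
      Matrix.zero_apply, Fin.sum_univ_five, J5, y5, Matrix.of_apply, Matrix.cons_val',
      Matrix.cons_val_zero, Matrix.cons_val_one, Matrix.head_cons, Matrix.empty_val',
      Matrix.cons_val_fin_one, Matrix.head_fin_const, Matrix.cons_val_two, Matrix.tail_cons,
      Matrix.cons_val_three, Matrix.cons_val_four, mul_zero, mul_one, zero_mul, one_mul,
      add_zero, zero_add, neg_zero, sub_zero, zero_sub, neg_neg] at hC01 hC02 hC04 hC11 hC21 hC32 hJ00 hJ01 hJ02 hJ03 hJ04 hJ11 hJ12 hJ13 hJ14 hJ22 hJ23 hJ24 hJ33 hJ34 hJ44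
    ext i j
    fin_cases i <;> fin_cases j <;>
      simp [Cmat, x5, Matrix.sub_apply, Matrix.vecHead, Matrix.vecTail] <;>
      first
        | linear_combination (1/2)*hJ00
        | linear_combination hJ01
        | linear_combination (1/2)*hJ00 - hJ04 - hJ13 + hJ24 + (1/2)*hJ44 - (1/2)*hC01 + (1/2)*hC21 + (1/2)*hC32
        | linear_combination hJ03 + (1/2)*hC04 - (1/2)*hC11
        | linear_combination hJ04 - (1/2)*hJ44 - (1/2)*hC21
        | linear_combination (-1/2)*hC04 + (1/2)*hC11
        | linear_combination (1/2)*hJ00 - hJ04 + (1/2)*hJ44 - (1/2)*hC01 + (1/2)*hC21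
        | linear_combination hJ03 - (1/2)*hC02 + (1/2)*hC04 - (1/2)*hC11
        | linear_combination (1/2)*hJ33
        | linear_combination (-1/2)*hC04
        | linear_combination (1/2)*hJ44 + (1/2)*hC21
        | linear_combination hJ14
        | linear_combination hJ24
        | linear_combination hJ34 + (1/2)*hC04
        | linear_combination (1/2)*hJ44
        | linear_combination (1/2)*hJ11
        | linear_combination hJ12
        | linear_combination (-1/2)*hJ00 + hJ04 + hJ13 - (1/2)*hJ44 + (1/2)*hC01 - (1/2)*hC21
        | linear_combination (-1/2)*hJ00 + hJ02 + hJ04 + hJ13 - hJ24 - (1/2)*hJ44 + (1/2)*hC01 - (1/2)*hC21 - (1/2)*hC32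
        | linear_combination (1/2)*hJ22
        | linear_combination (-1)*hJ03 + hJ23 + (1/2)*hC02 - (1/2)*hC04 + (1/2)*hC11
  · rintro ⟨a, b, c, d, rfl⟩
    ext i j
    fin_cases i <;> fin_cases j <;>
      simp [y5, Cmat, x5, Matrix.mul_apply, Fin.sum_univ_five] <;> ring
end
end

section
/- The map (a,b,c,d,e) ↦ (−3a, b, d) restricts to a bijection from the zero fiber of the adjoint quotient on the sl(4,ℂ) Slodowy slice, i.e., the set {(a,b,c,d,e) ∈ ℂ⁵ : c = −3a², e = 20a³, bd = −81a⁴}, onto the A₃-surface singularity {(x,y,z) ∈ ℂ³ : x⁴ + yz = 0}. -/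
noncomputable section

/-- The map `(a,b,c,d,e) ↦ (−3a, b, d)` is a bijection from the zero fiber
`{c = −3a², e = 20a³, bd = −81a⁴}` of the adjoint quotient on the `sl(4,ℂ)` Slodowy slice
onto the `A₃`-surface singularity `{x⁴ + yz = 0}`. -/
theorem zero_fiber_sl4_is_A3 :
    Set.BijOn (fun p : ℂ × ℂ × ℂ × ℂ × ℂ => ((-3 * p.1, p.2.1, p.2.2.2.1) : ℂ × ℂ × ℂ))
      {p : ℂ × ℂ × ℂ × ℂ × ℂ |
        p.2.2.1 = -3 * p.1 ^ 2 ∧ p.2.2.2.2 = 20 * p.1 ^ 3 ∧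
          p.2.1 * p.2.2.2.1 = -81 * p.1 ^ 4}
      {q : ℂ × ℂ × ℂ | q.1 ^ 4 + q.2.1 * q.2.2 = 0} := by
  refine ⟨?_, ?_, ?_⟩
  · rintro ⟨a, b, c, d, e⟩ ⟨hc, he, hbd⟩
    simp only [Set.mem_setOf_eq] at *
    rw [hbd]; ring
  · rintro ⟨a, b, c, d, e⟩ ⟨hc, he, hbd⟩ ⟨a', b', c', d', e'⟩ ⟨hc', he', hbd'⟩ h
    simp only [Prod.mk.injEq] at h
    simp only at hc he hc' he'
    obtain ⟨h1, h2, h3⟩ := h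
    have ha : a = a' := by linear_combination -h1 / 3
    simp only [Prod.mk.injEq]
    exact ⟨ha, h2, by rw [hc, hc', ha], h3, by rw [he, he', ha]⟩
  · rintro ⟨x, y, z⟩ hq
    simp only [Set.mem_setOf_eq] at hq
    refine ⟨(-x/3, y, -3*(-x/3)^2, z, 20*(-x/3)^3), ⟨rfl, rfl, ?_⟩, ?_⟩
    · simp only; linear_combination hq
    · show ((-3 * (-x/3), y, z) : ℂ × ℂ × ℂ) = (x, y, z)
      ring
end
end

section
/- The map (a,b,c,d) ↦ (b, c, b² + c − 2d) restricts to a bijection from the zero fiber of the adjoint quotient on the 𝔰𝔬(5,ℂ) Slodowy slice, i.e., the set {(a,b,c,d) ∈ ℂ⁴ : a = −c − b²/2 and b⁴ + c(b² − 2d + c) = 0}, onto the A₃-surface singularity {(x,y,z) ∈ ℂ³ : x⁴ + yz = 0}. -/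
noncomputable section

/-- The map `(a,b,c,d) ↦ (b, c, b² + c − 2d)` is a bijection from the zero fiber
`{a = −c − b²/2, b⁴ + c(b² − 2d + c) = 0}` of the adjoint quotient on the `𝔰𝔬(5,ℂ)`
Slodowy slice onto the `A₃`-surface singularity `{x⁴ + yz = 0}`. -/
theorem zero_fiber_so5_is_A3 :
    Set.BijOn
      (fun p : ℂ × ℂ × ℂ × ℂ =>
        ((p.2.1, p.2.2.1, p.2.1 ^ 2 + p.2.2.1 - 2 * p.2.2.2) : ℂ × ℂ × ℂ))
      {p : ℂ × ℂ × ℂ × ℂ |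
        p.1 = -p.2.2.1 - p.2.1 ^ 2 / 2 ∧
          p.2.1 ^ 4 + p.2.2.1 * (p.2.1 ^ 2 - 2 * p.2.2.2 + p.2.2.1) = 0}
      {q : ℂ × ℂ × ℂ | q.1 ^ 4 + q.2.1 * q.2.2 = 0} := by
  refine ⟨?_, ?_, ?_⟩
  · rintro ⟨a, b, c, d⟩ ⟨_, h2⟩
    simp only [Set.mem_setOf_eq] at h2 ⊢
    ring_nf
    ring_nf at h2
    linear_combination h2
  · rintro ⟨a, b, c, d⟩ ⟨ha, _⟩ ⟨a', b', c', d'⟩ ⟨ha', _⟩ h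
    simp only [Prod.mk.injEq] at h
    obtain ⟨hb, hc, hz⟩ := h
    subst hb hc
    have hd : d = d' := by linear_combination -hz / 2
    subst hd
    simp only at ha ha'
    rw [Prod.mk.injEq, ha, ha']
    exact ⟨rfl, rfl⟩
  · rintro ⟨x, y, z⟩ hq
    simp only [Set.mem_setOf_eq] at hq
    refine ⟨(-y - x ^ 2 / 2, x, y, (x ^ 2 + y - z) / 2), ⟨rfl, ?_⟩, ?_⟩
    · linear_combination hq
    · simp only [Prod.mk.injEq, true_and]
      ring
end
end
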